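/- For natural numbers k ≥ 1 and n ≥ 2k, the following are equivalent: (i) m ≥ 2k; (ii) there exists a matrix A ∈ ℝ^{m×n} such that for all vectors x, z ∈ ℝ^n each having at most k nonzero entries, |Ax| = |Az| implies z = x or z = -x. Hence m = 2k phaseless measurements are necessary and sufficient for unique sparse phase retrieval of every k-sparse real signal. -/

import Mathlib

open MvPolynomial

noncomputable section

namespace SPR

/-- Generic determinant property: every "signed generalized submatrix" with a
nonzero diagonal pattern and entries at distinct positions has nonzero determinant. -/
def GoodDet (m0 n : ℕ) (A : Matrix (Fin m0) (Fin n) ℝ) : Prop :=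
  ∀ d : ℕ, d ≤ m0 → ∀ ρ : Fin d → Fin m0, ∀ γ : Fin d → Fin n,
    ∀ ε : Fin d → Fin d → ℝ,
      (∀ i j, ε i j = 0 ∨ ε i j = 1 ∨ ε i j = -1) →
      (∀ i j i' j', ε i j ≠ 0 → ε i' j' ≠ 0 → ρ i = ρ i' → γ j = γ j' → i = i' ∧ j = j') →
      (∀ i, ε i i ≠ 0) →
      (Matrix.det (Matrix.of fun i j => ε i j * A (ρ i) (γ j))) ≠ 0

def Cfg (m0 n : ℕ) : Type :=
  Σ d : Fin (m0 + 1), (Fin d → Fin m0) × (Fin d → Fin n) × (Fin d → Fin d → Fin 3)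

instance (m0 n : ℕ) : Fintype (Cfg m0 n) := by unfold Cfg; infer_instance

def decode : Fin 3 → ℝ := ![0, 1, -1]

def Mp {m0 n : ℕ} (c : Cfg m0 n) :
    Matrix (Fin c.1) (Fin c.1) (MvPolynomial (Fin m0 × Fin n) ℝ) :=
  Matrix.of fun i j => C (decode (c.2.2.2 i j)) * X (c.2.1 i, c.2.2.1 j)

def Cond {m0 n : ℕ} (c : Cfg m0 n) : Prop :=
  (∀ i j i' j', decode (c.2.2.2 i j) ≠ 0 → decode (c.2.2.2 i' j') ≠ 0 →
      c.2.1 i = c.2.1 i' → c.2.2.1 j = c.2.2.1 j' → i = i' ∧ j = j') ∧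
  (∀ i, decode (c.2.2.2 i i) ≠ 0)

lemma det_Mp_ne_zero {m0 n : ℕ} (c : Cfg m0 n) (hc : Cond c) : (Mp c).det ≠ 0 := by
  classical
  obtain ⟨d, ρ, γ, e⟩ := c
  intro h0
  set pt : Fin m0 × Fin n → ℝ :=
    fun s => if ∃ i, ρ i = s.1 ∧ γ i = s.2 then 1 else 0 with hpt
  have h1 : eval pt (Mp ⟨d, ρ, γ, e⟩).det = 0 := by rw [h0, map_zero]
  rw [(eval pt).map_det, RingHom.mapMatrix_apply] at h1
  have hN : (Mp ⟨d, ρ, γ, e⟩).map (eval pt) =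
      Matrix.diagonal (fun i => decode (e i i)) := by
    ext i j
    by_cases hij : i = j
    · subst hij
      have : pt (ρ i, γ i) = 1 := by
        rw [hpt]; exact if_pos ⟨i, rfl, rfl⟩
      simp [Mp, Matrix.map, this]
    · have hd2 := hc.2
      by_cases he : decode (e i j) = 0
      · simp [Mp, Matrix.map, he, Matrix.diagonal, hij]
      · have : pt (ρ i, γ j) = 0 := by
          rw [hpt]
          refine if_neg ?_
          rintro ⟨i', hρ, hγ⟩
          obtain ⟨h1', h2'⟩ := hc.1 i j i' i' he (hd2 i') hρ.symm hγ.symm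
          exact hij (h1'.trans h2'.symm)
        simp [Mp, Matrix.map, this, Matrix.diagonal, hij]
  rw [hN, Matrix.det_diagonal] at h1
  exact Finset.prod_ne_zero_iff.mpr (fun i _ => hc.2 i) h1


lemma exists_goodDet (m0 n : ℕ) : ∃ A : Matrix (Fin m0) (Fin n) ℝ, GoodDet m0 n A := by
  classical
  set Q : MvPolynomial (Fin m0 × Fin n) ℝ :=
    ∏ c : Cfg m0 n, if Cond c then (Mp c).det else 1 with hQ
  have hQ0 : Q ≠ 0 := by
    rw [hQ]
    refine Finset.prod_ne_zero_iff.mpr (fun c _ => ?_)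
    split
    · exact det_Mp_ne_zero c ‹_›
    · exact one_ne_zero
  have hex : ∃ pt : Fin m0 × Fin n → ℝ, eval pt Q ≠ 0 := by
    by_contra h
    push_neg at h
    exact hQ0 (MvPolynomial.funext (fun x => by rw [h x, map_zero]))
  obtain ⟨pt, hpt⟩ := hex
  refine ⟨Matrix.of fun i j => pt (i, j), ?_⟩
  intro d hd ρ γ ε hval hinj hdiag
  set e : Fin d → Fin d → Fin 3 :=
    fun i j => if ε i j = 0 then 0 else if ε i j = 1 then 1 else 2 with he
  have hde : ∀ i j, decode (e i j) = ε i j := by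
    intro i j
    rcases hval i j with h | h | h <;>
      norm_num [he, h, decode] <;> rfl
  set c : Cfg m0 n := ⟨⟨d, Nat.lt_succ_of_le hd⟩, ρ, γ, e⟩ with hc
  have hcond : Cond c := by
    constructor
    · intro i j i' j' h1 h2 h3 h4
      rw [show c.2.2.2 = e from rfl, hde] at h1 h2
      exact hinj i j i' j' h1 h2 h3 h4
    · intro i
      rw [show c.2.2.2 = e from rfl, hde]
      exact hdiag i
  have hfac : eval pt (if Cond c then (Mp c).det else 1) ≠ 0 := by
    rw [hQ, map_prod] at hpt
    exact Finset.prod_ne_zero_iff.mp hpt c (Finset.mem_univ c)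
  rw [if_pos hcond, (eval pt).map_det, RingHom.mapMatrix_apply] at hfac
  have : (Mp c).map (eval pt) =
      Matrix.of fun i j => ε i j * (Matrix.of fun i j => pt (i, j)) (ρ i) (γ j) := by
    ext i j
    simp [Mp, Matrix.map, hde]
    exact congrArg (· * pt (ρ i, γ j)) (hde i j)
  rwa [this] at hfac


lemma goodDet_fintype {m0 n : ℕ} {A : Matrix (Fin m0) (Fin n) ℝ} (hA : GoodDet m0 n A)
    {ι : Type} [Fintype ι] [DecidableEq ι] (hcard : Fintype.card ι ≤ m0)
    (ρ : ι → Fin m0) (γ : ι → Fin n) (ε : ι → ι → ℝ)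
    (hval : ∀ i j, ε i j = 0 ∨ ε i j = 1 ∨ ε i j = -1)
    (hinj : ∀ i j i' j', ε i j ≠ 0 → ε i' j' ≠ 0 → ρ i = ρ i' → γ j = γ j' → i = i' ∧ j = j')
    (hdiag : ∀ i, ε i i ≠ 0) :
    (Matrix.det (Matrix.of fun i j => ε i j * A (ρ i) (γ j))) ≠ 0 := by
  classical
  set e : Fin (Fintype.card ι) ≃ ι := (Fintype.equivFin ι).symm with he
  have h := hA (Fintype.card ι) hcard (ρ ∘ e) (γ ∘ e) (fun i j => ε (e i) (e j))
    (fun i j => hval (e i) (e j))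
    (fun i j i' j' h1 h2 h3 h4 => by
      obtain ⟨ha, hb⟩ := hinj (e i) (e j) (e i') (e j') h1 h2 h3 h4
      exact ⟨e.injective ha, e.injective hb⟩)
    (fun i => hdiag (e i))
  rw [← Matrix.det_submatrix_equiv_self e (Matrix.of fun i j => ε i j * A (ρ i) (γ j))]
  exact h

lemma vanish {m0 n : ℕ} {A : Matrix (Fin m0) (Fin n) ℝ} (hA : GoodDet m0 n A)
    (w : Fin n → ℝ) (W : Finset (Fin n)) (S' : Finset (Fin m0))
    (hsupp : ∀ j, w j ≠ 0 → j ∈ W) (hcard : W.card ≤ S'.card)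
    (hzero : ∀ i ∈ S', A.mulVec w i = 0) : w = 0 := by
  classical
  obtain ⟨S'', hsub, hScard⟩ := Finset.exists_subset_card_eq hcard
  have hcards : Fintype.card ↥W = Fintype.card ↥S'' := by
    simp [Fintype.card_coe, hScard]
  set eqv : ↥W ≃ ↥S'' := Fintype.equivOfCardEq hcards with heqv
  set ρ : ↥W → Fin m0 := fun j => (eqv j : Fin m0) with hρ
  set γ : ↥W → Fin n := fun j => (j : Fin n) with hγ
  have hρi : Function.Injective ρ := fun a b h => eqv.injective (Subtype.ext h)
  have hγi : Function.Injective γ := fun a b h => Subtype.ext h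
  have hdet := goodDet_fintype hA
    (by
      rw [Fintype.card_coe]
      exact le_trans hcard (le_trans (Finset.card_le_univ S') (by simp)))
    ρ γ (fun _ _ => (1 : ℝ))
    (fun i j => Or.inr (Or.inl rfl))
    (fun i j i' j' _ _ h3 h4 => ⟨hρi h3, hγi h4⟩)
    (fun i => one_ne_zero)
  have hone : (Matrix.of fun (i j : ↥W) => (1:ℝ) * A (ρ i) (γ j)) =
      Matrix.of fun (i j : ↥W) => A (ρ i) (γ j) := by
    ext i j; simp
  rw [hone] at hdet
  have hmv : (Matrix.of fun (i j : ↥W) => A (ρ i) (γ j)).mulVec (fun j => w (j : Fin n)) = 0 := by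
    funext i
    have hsum : ∑ j : ↥W, A (ρ i) (γ j) * w (j : Fin n) = ∑ j ∈ W, A (ρ i) j * w j := by
      rw [← Finset.sum_coe_sort W (fun j => A (ρ i) j * w j)]
    have hsum2 : ∑ j ∈ W, A (ρ i) j * w j = ∑ j : Fin n, A (ρ i) j * w j := by
      refine Finset.sum_subset (Finset.subset_univ W) (fun x _ hx => ?_)
      have : w x = 0 := by
        by_contra hwx
        exact hx (hsupp x hwx)
      rw [this, mul_zero]
    have hrfl : (Matrix.of fun (i j : ↥W) => A (ρ i) (γ j)).mulVec (fun j => w (j : Fin n)) i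
        = ∑ j : ↥W, A (ρ i) (γ j) * w (j : Fin n) := rfl
    have hz : A.mulVec w (ρ i) = 0 := hzero (ρ i) (hsub (eqv i).2)
    have hz' : ∑ j : Fin n, A (ρ i) j * w j = 0 := hz
    show (Matrix.of fun (i j : ↥W) => A (ρ i) (γ j)).mulVec (fun j => w (j : Fin n)) i = 0
    rw [hrfl, hsum, hsum2, hz']
  have hw0 := Matrix.eq_zero_of_mulVec_eq_zero hdet hmv
  funext j
  by_cases hj : j ∈ W
  · exact congrFun hw0 ⟨j, hj⟩
  · by_contra hwj
    exact hj (hsupp j hwj)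


lemma mem_ne {α : Type*} {c d : α} {F G : Finset α} (hc : c ∈ F) (hd : d ∈ G)
    (h : Disjoint F G) : c ≠ d :=
  fun h' => Finset.disjoint_left.mp h hc (h' ▸ hd)

lemma core {k n : ℕ} {A : Matrix (Fin (2*k)) (Fin n) ℝ} (hA : GoodDet (2*k) n A)
    (x z : Fin n → ℝ)
    (hx : (Function.support x).ncard ≤ k) (hz : (Function.support z).ncard ≤ k)
    (habs : ∀ i, |A.mulVec x i| = |A.mulVec z i|) : z = x ∨ z = -x := by
  classical
  set u : Fin n → ℝ := x - z with hu
  set v : Fin n → ℝ := x + z with hv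
  have hmvu : ∀ i, A.mulVec u i = A.mulVec x i - A.mulVec z i := by
    intro i; rw [hu, Matrix.mulVec_sub]; rfl
  have hmvv : ∀ i, A.mulVec v i = A.mulVec x i + A.mulVec z i := by
    intro i; rw [hv, Matrix.mulVec_add]; rfl
  have hprod : ∀ i, A.mulVec u i * A.mulVec v i = 0 := by
    intro i
    rw [hmvu, hmvv]
    have h := habs i
    have hsq : (A.mulVec x i)^2 = (A.mulVec z i)^2 := by
      rw [← sq_abs, h, sq_abs]
    have : (A.mulVec x i - A.mulVec z i) * (A.mulVec x i + A.mulVec z i)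
        = (A.mulVec x i)^2 - (A.mulVec z i)^2 := by ring
    rw [this, hsq, sub_self]
  set Ω₁ : Finset (Fin n) := Finset.univ.filter (fun j => x j ≠ 0) with hΩ₁
  set Ω₂ : Finset (Fin n) := Finset.univ.filter (fun j => z j ≠ 0) with hΩ₂
  have hΩ₁c : Ω₁.card ≤ k := by
    have hss : (Function.support x) = ↑Ω₁ := by
      ext j; simp [Function.mem_support, hΩ₁]
    rwa [hss, Set.ncard_coe_finset] at hx
  have hΩ₂c : Ω₂.card ≤ k := by
    have hss : (Function.support z) = ↑Ω₂ := by
      ext j; simp [Function.mem_support, hΩ₂]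
    rwa [hss, Set.ncard_coe_finset] at hz
  set S : Finset (Fin (2*k)) := Finset.univ.filter (fun i => A.mulVec u i = 0) with hS
  have hmemS : ∀ i, i ∈ S ↔ A.mulVec u i = 0 := by intro i; simp [hS]
  have hTv : ∀ i, i ∉ S → A.mulVec v i = 0 := by
    intro i hi
    have hne : A.mulVec u i ≠ 0 := by simpa [hmemS i] using hi
    rcases mul_eq_zero.mp (hprod i) with h | h
    · exact absurd h hne
    · exact h
  have hsupp_u : ∀ j, u j ≠ 0 → j ∈ Ω₁ ∪ Ω₂ := by
    intro j hj
    by_contra hc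
    simp only [Finset.mem_union, hΩ₁, hΩ₂, Finset.mem_filter, Finset.mem_univ, true_and] at hc
    push_neg at hc
    exact hj (by simp [hu, hc.1, hc.2])
  have hsupp_v : ∀ j, v j ≠ 0 → j ∈ Ω₁ ∪ Ω₂ := by
    intro j hj
    by_contra hc
    simp only [Finset.mem_union, hΩ₁, hΩ₂, Finset.mem_filter, Finset.mem_univ, true_and] at hc
    push_neg at hc
    exact hj (by simp [hv, hc.1, hc.2])
  set t := (Ω₁ ∪ Ω₂).card with ht
  by_cases h1 : t ≤ S.card
  · left
    have hu0 : u = 0 := vanish hA u (Ω₁ ∪ Ω₂) S hsupp_u h1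
      (fun i hi => (hmemS i).mp hi)
    have : x = z := sub_eq_zero.mp hu0
    exact this.symm
  by_cases h2 : t ≤ Sᶜ.card
  · right
    have hv0 : v = 0 := vanish hA v (Ω₁ ∪ Ω₂) Sᶜ hsupp_v h2
      (fun i hi => hTv i (Finset.mem_compl.mp hi))
    funext j
    have := congrFun hv0 j
    simp only [hv, Pi.add_apply, Pi.zero_apply] at this
    simp only [Pi.neg_apply]
    linarith
  push_neg at h1 h2
  set K : Finset (Fin n) := Ω₁ ∩ Ω₂ with hK
  set P : Finset (Fin n) := Ω₁ \ Ω₂ with hP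
  set Q : Finset (Fin n) := Ω₂ \ Ω₁ with hQ
  have hPK : K.card + P.card = Ω₁.card := Finset.card_inter_add_card_sdiff Ω₁ Ω₂
  have hQK : K.card + Q.card = Ω₂.card := by
    have := Finset.card_inter_add_card_sdiff Ω₂ Ω₁
    rwa [Finset.inter_comm, ← hK, ← hQ] at this
  have htK : t + K.card = Ω₁.card + Ω₂.card := Finset.card_union_add_card_inter Ω₁ Ω₂
  have hSc : S.card + Sᶜ.card = 2*k := by
    rw [Finset.card_add_card_compl]; simp
  have hrS : K.card < S.card := by omega
  have hrT : K.card < Sᶜ.card := by omega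
  obtain ⟨SK, hSKsub, hSKcard⟩ := Finset.exists_subset_card_eq hrS.le
  obtain ⟨TK, hTKsub, hTKcard⟩ := Finset.exists_subset_card_eq hrT.le
  have hdSKTK : Disjoint SK TK :=
    Finset.disjoint_of_subset_left hSKsub
      (Finset.disjoint_of_subset_right hTKsub disjoint_compl_right)
  set Rem : Finset (Fin (2*k)) := (SK ∪ TK)ᶜ with hRem
  have hRemcard : Rem.card = 2*k - (K.card + K.card) := by
    rw [hRem, Finset.card_compl, Finset.card_union_of_disjoint hdSKTK, hSKcard, hTKcard]
    simp
  obtain ⟨PR, hPRsub, hPRcard⟩ := Finset.exists_subset_card_eq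
    (show P.card ≤ Rem.card by omega)
  have hQle : Q.card ≤ (Rem \ PR).card := by
    rw [Finset.card_sdiff_of_subset hPRsub, hPRcard]; omega
  obtain ⟨QR, hQRsub, hQRcard⟩ := Finset.exists_subset_card_eq hQle
  have hQRRem : QR ⊆ Rem := hQRsub.trans (Finset.sdiff_subset)
  -- disjointness of row sets
  have dRemSK : Disjoint Rem SK :=
    Finset.disjoint_of_subset_right Finset.subset_union_left disjoint_compl_left
  have dRemTK : Disjoint Rem TK :=
    Finset.disjoint_of_subset_right Finset.subset_union_right disjoint_compl_left
  have dPRSK : Disjoint PR SK := Finset.disjoint_of_subset_left hPRsub dRemSK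
  have dPRTK : Disjoint PR TK := Finset.disjoint_of_subset_left hPRsub dRemTK
  have dQRSK : Disjoint QR SK := Finset.disjoint_of_subset_left hQRRem dRemSK
  have dQRTK : Disjoint QR TK := Finset.disjoint_of_subset_left hQRRem dRemTK
  have dQRPR : Disjoint QR PR := Finset.disjoint_of_subset_left hQRsub Finset.sdiff_disjoint
  -- disjointness of column sets
  have dPK : Disjoint P K :=
    Finset.disjoint_of_subset_right Finset.inter_subset_right Finset.sdiff_disjoint
  have dPQ : Disjoint P Q := by
    refine Finset.disjoint_left.mpr (fun a ha hb => ?_)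
    exact (Finset.mem_sdiff.mp ha).2 (Finset.mem_sdiff.mp hb).1
  have dKQ : Disjoint K Q :=
    (Finset.disjoint_of_subset_right Finset.inter_subset_left Finset.sdiff_disjoint).symm
  -- equivalences
  have hcPR : Fintype.card ↥P = Fintype.card ↥PR := by
    simp [Fintype.card_coe, hPRcard]
  have hcSK : Fintype.card ↥K = Fintype.card ↥SK := by
    simp [Fintype.card_coe, hSKcard]
  have hcTK : Fintype.card ↥K = Fintype.card ↥TK := by
    simp [Fintype.card_coe, hTKcard]
  have hcQR : Fintype.card ↥Q = Fintype.card ↥QR := by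
    simp [Fintype.card_coe, hQRcard]
  set ePR : ↥P ≃ ↥PR := Fintype.equivOfCardEq hcPR with hePR
  set eSK : ↥K ≃ ↥SK := Fintype.equivOfCardEq hcSK with heSK
  set eTK : ↥K ≃ ↥TK := Fintype.equivOfCardEq hcTK with heTK
  set eQR : ↥Q ≃ ↥QR := Fintype.equivOfCardEq hcQR with heQR
  set ρ : ((↥P ⊕ ↥K) ⊕ (↥K ⊕ ↥Q)) → Fin (2*k) :=
    Sum.elim (Sum.elim (fun a => ↑(ePR a)) (fun a => ↑(eSK a)))
             (Sum.elim (fun a => ↑(eTK a)) (fun a => ↑(eQR a))) with hρ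
  have hρS : ∀ a : ↥K, ρ (Sum.inl (Sum.inr a)) ∈ S := fun a => hSKsub (eSK a).2
  have hρT : ∀ a : ↥K, ρ (Sum.inr (Sum.inl a)) ∉ S := fun a =>
    Finset.mem_compl.mp (hTKsub (eTK a).2)
  have hρinj : Function.Injective ρ := by
    apply Function.Injective.sumElim
    · apply Function.Injective.sumElim
      · exact fun a b h => ePR.injective (Subtype.ext h)
      · exact fun a b h => eSK.injective (Subtype.ext h)
      · exact fun a b => mem_ne (ePR a).2 (eSK b).2 dPRSK
    · apply Function.Injective.sumElim
      · exact fun a b h => eTK.injective (Subtype.ext h)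
      · exact fun a b h => eQR.injective (Subtype.ext h)
      · exact fun a b => (mem_ne (eQR b).2 (eTK a).2 dQRTK).symm
    · rintro (a|a) (b|b)
      · exact mem_ne (ePR a).2 (eTK b).2 dPRTK
      · exact (mem_ne (eQR b).2 (ePR a).2 dQRPR).symm
      · exact mem_ne (eSK a).2 (eTK b).2 hdSKTK
      · exact (mem_ne (eQR b).2 (eSK a).2 dQRSK).symm
  set γ : ((↥P ⊕ ↥K) ⊕ (↥K ⊕ ↥Q)) → Fin n :=
    Sum.elim (Sum.elim (fun a => ↑a) (fun a => ↑a))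
             (Sum.elim (fun a => ↑a) (fun a => ↑a)) with hγ
  set ε : ((↥P ⊕ ↥K) ⊕ (↥K ⊕ ↥Q)) → ((↥P ⊕ ↥K) ⊕ (↥K ⊕ ↥Q)) → ℝ := fun i j =>
    Sum.elim (Sum.elim (fun _ => (1:ℝ)) (fun _ => if ρ i ∈ S then 1 else 0))
             (Sum.elim (fun _ => if ρ i ∈ S then 0 else 1)
                       (fun _ => if ρ i ∈ S then -1 else 1)) j with hε
  have hval : ∀ i j, ε i j = 0 ∨ ε i j = 1 ∨ ε i j = -1 := by
    intro i j
    rcases j with (a|a)|(a|a) <;> by_cases hρi : ρ i ∈ S <;> norm_num [hε, hρi]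
  have hdiag : ∀ i, ε i i ≠ 0 := by
    intro i
    rcases i with (a|a)|(a|a)
    · norm_num [hε]
    · norm_num [hε, hρS a]
    · norm_num [hε, hρT a]
    · by_cases hρi : ρ (Sum.inr (Sum.inr a)) ∈ S <;> norm_num [hε, hρi]
  have hinj : ∀ i j i' j', ε i j ≠ 0 → ε i' j' ≠ 0 → ρ i = ρ i' → γ j = γ j' →
      i = i' ∧ j = j' := by
    intro i j i' j' h1 h2 h3 h4
    refine ⟨hρinj h3, ?_⟩
    rcases j with (a|a)|(a|a) <;> rcases j' with (b|b)|(b|b) <;>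
      simp only [hγ, Sum.elim_inl, Sum.elim_inr] at h4
    · rw [Subtype.ext h4]
    · exact absurd h4 (mem_ne a.2 b.2 dPK)
    · exact absurd h4 (mem_ne a.2 b.2 dPK)
    · exact absurd h4 (mem_ne a.2 b.2 dPQ)
    · exact absurd h4.symm (mem_ne b.2 a.2 dPK)
    · rw [Subtype.ext h4]
    · -- K₂ vs K₃ : sign clash
      by_cases hρi : ρ i ∈ S
      · have hρi' : ρ i' ∈ S := h3 ▸ hρi
        simp [hε, hρi'] at h2
      · simp [hε, hρi] at h1
    · exact absurd h4 (mem_ne a.2 b.2 dKQ)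
    · exact absurd h4.symm (mem_ne b.2 a.2 dPK)
    · -- K₃ vs K₂ : sign clash
      by_cases hρi : ρ i ∈ S
      · simp [hε, hρi] at h1
      · have hρi' : ρ i' ∉ S := h3 ▸ hρi
        simp [hε, hρi'] at h2
    · rw [Subtype.ext h4]
    · exact absurd h4 (mem_ne a.2 b.2 dKQ)
    · exact absurd h4.symm (mem_ne b.2 a.2 dPQ)
    · exact absurd h4.symm (mem_ne b.2 a.2 dKQ)
    · exact absurd h4.symm (mem_ne b.2 a.2 dKQ)
    · rw [Subtype.ext h4]
  have hcard : Fintype.card ((↥P ⊕ ↥K) ⊕ (↥K ⊕ ↥Q)) ≤ 2*k := by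
    simp only [Fintype.card_sum, Fintype.card_coe]
    omega
  have hdet := goodDet_fintype hA hcard ρ γ ε hval hinj hdiag
  set w : ((↥P ⊕ ↥K) ⊕ (↥K ⊕ ↥Q)) → ℝ :=
    Sum.elim (Sum.elim (fun a => x ↑a) (fun a => x ↑a - z ↑a))
             (Sum.elim (fun a => x ↑a + z ↑a) (fun a => z ↑a)) with hw
  have hPz : ∀ a : ↥P, z ↑a = 0 := by
    intro a
    have h2 := (Finset.mem_sdiff.mp a.2).2
    by_contra hc
    exact h2 (by simp [hΩ₂, hc])
  have hQx : ∀ a : ↥Q, x ↑a = 0 := by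
    intro a
    have h2 := (Finset.mem_sdiff.mp a.2).2
    by_contra hc
    exact h2 (by simp [hΩ₁, hc])
  have hkey : ∀ (i0 : Fin (2*k)) (y : Fin n → ℝ), (∀ j, y j ≠ 0 → j ∈ Ω₁ ∪ Ω₂) →
      (∑ a : ↥P, A i0 ↑a * y ↑a) + (∑ a : ↥K, A i0 ↑a * y ↑a)
        + (∑ a : ↥Q, A i0 ↑a * y ↑a) = A.mulVec y i0 := by
    intro i0 y hy
    rw [Finset.sum_coe_sort P (fun j => A i0 j * y j),
        Finset.sum_coe_sort K (fun j => A i0 j * y j),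
        Finset.sum_coe_sort Q (fun j => A i0 j * y j),
        ← Finset.sum_union dPK,
        ← Finset.sum_union (Finset.disjoint_union_left.mpr ⟨dPQ, dKQ⟩)]
    have hPKQ : (P ∪ K) ∪ Q = Ω₁ ∪ Ω₂ := by
      rw [hP, hK, hQ, Finset.sdiff_union_inter, Finset.union_sdiff_self_eq_union]
    rw [hPKQ]
    rw [Finset.sum_subset (Finset.subset_univ _) (fun j _ hj => by
      have hy0 : y j = 0 := by
        by_contra hc; exact hj (hy j hc)
      rw [hy0, mul_zero])]
    rfl
  have hmv : (Matrix.of fun i j => ε i j * A (ρ i) (γ j)).mulVec w = 0 := by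
    funext i
    have hrfl : (Matrix.of fun i j => ε i j * A (ρ i) (γ j)).mulVec w i
        = ∑ j : ((↥P ⊕ ↥K) ⊕ (↥K ⊕ ↥Q)), ε i j * A (ρ i) (γ j) * w j := rfl
    simp only [Pi.zero_apply]
    rw [hrfl, Fintype.sum_sum_type, Fintype.sum_sum_type, Fintype.sum_sum_type]
    by_cases hρi : ρ i ∈ S
    · have e1 : ∑ a : ↥P, ε i (Sum.inl (Sum.inl a)) * A (ρ i) (γ (Sum.inl (Sum.inl a)))
          * w (Sum.inl (Sum.inl a)) = ∑ a : ↥P, A (ρ i) ↑a * u ↑a := by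
        refine Finset.sum_congr rfl (fun a _ => ?_)
        simp [hε, hγ, hw, hu, hPz a]
      have e2 : ∑ a : ↥K, ε i (Sum.inl (Sum.inr a)) * A (ρ i) (γ (Sum.inl (Sum.inr a)))
          * w (Sum.inl (Sum.inr a)) = ∑ a : ↥K, A (ρ i) ↑a * u ↑a := by
        refine Finset.sum_congr rfl (fun a _ => ?_)
        simp [hε, hγ, hw, hu, hρi]
      have e3 : ∑ a : ↥K, ε i (Sum.inr (Sum.inl a)) * A (ρ i) (γ (Sum.inr (Sum.inl a)))
          * w (Sum.inr (Sum.inl a)) = 0 := by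
        refine Finset.sum_eq_zero (fun a _ => ?_)
        simp [hε, hρi]
      have e4 : ∑ a : ↥Q, ε i (Sum.inr (Sum.inr a)) * A (ρ i) (γ (Sum.inr (Sum.inr a)))
          * w (Sum.inr (Sum.inr a)) = ∑ a : ↥Q, A (ρ i) ↑a * u ↑a := by
        refine Finset.sum_congr rfl (fun a _ => ?_)
        simp [hε, hγ, hw, hu, hρi, hQx a]
      rw [e1, e2, e3, e4]
      have hk := hkey (ρ i) u hsupp_u
      have hz0 : A.mulVec u (ρ i) = 0 := (hmemS _).mp hρi
      linarith
    · have e1 : ∑ a : ↥P, ε i (Sum.inl (Sum.inl a)) * A (ρ i) (γ (Sum.inl (Sum.inl a)))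
          * w (Sum.inl (Sum.inl a)) = ∑ a : ↥P, A (ρ i) ↑a * v ↑a := by
        refine Finset.sum_congr rfl (fun a _ => ?_)
        simp [hε, hγ, hw, hv, hPz a]
      have e2 : ∑ a : ↥K, ε i (Sum.inl (Sum.inr a)) * A (ρ i) (γ (Sum.inl (Sum.inr a)))
          * w (Sum.inl (Sum.inr a)) = 0 := by
        refine Finset.sum_eq_zero (fun a _ => ?_)
        simp [hε, hρi]
      have e3 : ∑ a : ↥K, ε i (Sum.inr (Sum.inl a)) * A (ρ i) (γ (Sum.inr (Sum.inl a)))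
          * w (Sum.inr (Sum.inl a)) = ∑ a : ↥K, A (ρ i) ↑a * v ↑a := by
        refine Finset.sum_congr rfl (fun a _ => ?_)
        simp [hε, hγ, hw, hv, hρi]
      have e4 : ∑ a : ↥Q, ε i (Sum.inr (Sum.inr a)) * A (ρ i) (γ (Sum.inr (Sum.inr a)))
          * w (Sum.inr (Sum.inr a)) = ∑ a : ↥Q, A (ρ i) ↑a * v ↑a := by
        refine Finset.sum_congr rfl (fun a _ => ?_)
        simp [hε, hγ, hw, hv, hρi, hQx a]
      rw [e1, e2, e3, e4]
      have hk := hkey (ρ i) v hsupp_v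
      have hz0 : A.mulVec v (ρ i) = 0 := hTv _ hρi
      linarith
  have hw0 := Matrix.eq_zero_of_mulVec_eq_zero hdet hmv
  left
  funext j
  by_cases hj1 : j ∈ Ω₁ <;> by_cases hj2 : j ∈ Ω₂
  · have hjK : j ∈ K := by rw [hK]; exact Finset.mem_inter.mpr ⟨hj1, hj2⟩
    have hc := congrFun hw0 (Sum.inl (Sum.inr ⟨j, hjK⟩))
    simp only [hw, Sum.elim_inl, Sum.elim_inr, Pi.zero_apply] at hc
    linarith
  · have hjP : j ∈ P := by rw [hP]; exact Finset.mem_sdiff.mpr ⟨hj1, hj2⟩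
    have hc := congrFun hw0 (Sum.inl (Sum.inl ⟨j, hjP⟩))
    simp only [hw, Sum.elim_inl, Pi.zero_apply] at hc
    have hz0 : z j = 0 := by
      by_contra hcz; exact hj2 (by simp [hΩ₂, hcz])
    rw [hz0, hc]
  · have hjQ : j ∈ Q := by rw [hQ]; exact Finset.mem_sdiff.mpr ⟨hj2, hj1⟩
    have hc := congrFun hw0 (Sum.inr (Sum.inr ⟨j, hjQ⟩))
    simp only [hw, Sum.elim_inr, Pi.zero_apply] at hc
    have hx0 : x j = 0 := by
      by_contra hcx; exact hj1 (by simp [hΩ₁, hcx])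
    rw [hc, hx0]
  · have hz0 : z j = 0 := by
      by_contra hcz; exact hj2 (by simp [hΩ₂, hcz])
    have hx0 : x j = 0 := by
      by_contra hcx; exact hj1 (by simp [hΩ₁, hcx])
    rw [hz0, hx0]


lemma forward {k m n : ℕ} (hm : 2*k ≤ m) :
    ∃ A : Matrix (Fin m) (Fin n) ℝ, ∀ x z : Fin n → ℝ,
      (Function.support x).ncard ≤ k → (Function.support z).ncard ≤ k →
      (∀ i, |A.mulVec x i| = |A.mulVec z i|) → z = x ∨ z = -x := by
  obtain ⟨A₀, hA₀⟩ := exists_goodDet (2*k) n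
  refine ⟨Matrix.of fun i j => if h : (i : ℕ) < 2*k then A₀ ⟨i, h⟩ j else 0, ?_⟩
  intro x z hx hz habs
  apply core hA₀ x z hx hz
  intro i0
  have hlt : (i0 : ℕ) < m := lt_of_lt_of_le i0.2 hm
  have hrow : ∀ y : Fin n → ℝ,
      (Matrix.of fun (i : Fin m) (j : Fin n) =>
        if h : (i : ℕ) < 2*k then A₀ ⟨i, h⟩ j else 0).mulVec y
        ⟨(i0:ℕ), hlt⟩ = A₀.mulVec y i0 := by
    intro y
    have hL : (Matrix.of fun (i : Fin m) (j : Fin n) =>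
        if h : (i : ℕ) < 2*k then A₀ ⟨i, h⟩ j else 0).mulVec y ⟨(i0:ℕ), hlt⟩
        = ∑ j : Fin n, (if h : (i0:ℕ) < 2*k then A₀ ⟨(i0:ℕ), h⟩ j else 0) * y j := rfl
    have hR : A₀.mulVec y i0 = ∑ j : Fin n, A₀ i0 j * y j := rfl
    rw [hL, hR]
    refine Finset.sum_congr rfl (fun j _ => ?_)
    rw [dif_pos i0.2]
  have := habs ⟨(i0:ℕ), hlt⟩
  rwa [hrow x, hrow z] at this

lemma converse {k m n : ℕ} (hk : 1 ≤ k) (hn : 2*k ≤ n)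
    (A : Matrix (Fin m) (Fin n) ℝ)
    (hgood : ∀ x z : Fin n → ℝ, (Function.support x).ncard ≤ k →
      (Function.support z).ncard ≤ k → (∀ i, |A.mulVec x i| = |A.mulVec z i|) →
      z = x ∨ z = -x) :
    2*k ≤ m := by
  classical
  by_contra hm
  push_neg at hm
  set E : (Fin (2*k) → ℝ) →ₗ[ℝ] (Fin n → ℝ) :=
    { toFun := fun y j => if h : (j:ℕ) < 2*k then y ⟨j, h⟩ else 0
      map_add' := by
        intro a b; funext j; by_cases h : (j:ℕ) < 2*k <;> simp [h]
      map_smul' := by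
        intro c a; funext j; by_cases h : (j:ℕ) < 2*k <;> simp [h] } with hE
  set φ : (Fin (2*k) → ℝ) →ₗ[ℝ] (Fin m → ℝ) := A.mulVecLin.comp E with hφ
  have hni : ¬ Function.Injective φ := by
    intro hinj
    have hle := LinearMap.finrank_le_finrank_of_injective hinj
    rw [Module.finrank_fintype_fun_eq_card, Module.finrank_fintype_fun_eq_card] at hle
    simp only [Fintype.card_fin] at hle
    omega
  have hker : LinearMap.ker φ ≠ ⊥ := by
    intro hbot
    exact hni (LinearMap.ker_eq_bot.mp hbot)
  obtain ⟨y, hymem, hyne⟩ := Submodule.exists_mem_ne_zero_of_ne_bot hker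
  have hy0 : A.mulVec (E y) = 0 := by
    have : φ y = 0 := hymem
    simpa [hφ, Matrix.mulVecLin] using this
  set vf : Fin n → ℝ := E y with hvf
  have hvf2k : ∀ j : Fin n, ¬ ((j:ℕ) < 2*k) → vf j = 0 := by
    intro j hj
    simp [hvf, hE, dif_neg hj]
  set xv : Fin n → ℝ := fun j => if (j:ℕ) < k then vf j else 0 with hxv
  set wv : Fin n → ℝ := fun j => if (j:ℕ) < k then 0 else vf j with hwv
  have hsum : ∀ j, vf j = xv j + wv j := by
    intro j; by_cases h : (j:ℕ) < k <;> simp [hxv, hwv, h]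
  have habs : ∀ i, |A.mulVec xv i| = |A.mulVec (-wv) i| := by
    intro i
    have hadd : A.mulVec xv i + A.mulVec wv i = 0 := by
      have : A.mulVec (xv + wv) i = A.mulVec xv i + A.mulVec wv i := by
        rw [Matrix.mulVec_add]; rfl
      rw [← this, show xv + wv = vf from funext (fun j => (hsum j).symm), hy0]
      rfl
    have hneg : A.mulVec (-wv) i = - A.mulVec wv i := by
      rw [Matrix.mulVec_neg]; rfl
    rw [hneg]
    have : A.mulVec xv i = - A.mulVec wv i := by linarith
    rw [this]
  have hxcard : (Function.support xv).ncard ≤ k := by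
    have hsub : Function.support xv ⊆
        ↑(Finset.univ.filter (fun j : Fin n => (j:ℕ) < k)) := by
      intro j hj
      simp only [Function.mem_support, hxv] at hj
      by_cases h : (j:ℕ) < k
      · simp [h]
      · simp [h] at hj
    refine le_trans (Set.ncard_le_ncard hsub (Set.toFinite _)) ?_
    rw [Set.ncard_coe_finset]
    have := Finset.card_le_card_of_injOn (f := fun j : Fin n => (j : ℕ))
      (s := Finset.univ.filter (fun j : Fin n => (j:ℕ) < k))
      (t := Finset.range k) ?_ ?_
    · simpa using this
    · intro a ha; simp at ha ⊢; exact ha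
    · intro a _ b _ h; exact Fin.ext h
  have hwcard : (Function.support (-wv)).ncard ≤ k := by
    have hsub : Function.support (-wv) ⊆
        ↑(Finset.univ.filter (fun j : Fin n => k ≤ (j:ℕ) ∧ (j:ℕ) < 2*k)) := by
      intro j hj
      simp only [Function.mem_support, Pi.neg_apply, ne_eq, neg_eq_zero, hwv] at hj
      by_cases h : (j:ℕ) < k
      · simp [h] at hj
      · simp only [h, if_false] at hj
        have h2 : (j:ℕ) < 2*k := by
          by_contra hc
          exact hj (hvf2k j hc)
        simp [h2]
        omega
    refine le_trans (Set.ncard_le_ncard hsub (Set.toFinite _)) ?_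
    rw [Set.ncard_coe_finset]
    have := Finset.card_le_card_of_injOn (f := fun j : Fin n => (j : ℕ) - k)
      (s := Finset.univ.filter (fun j : Fin n => k ≤ (j:ℕ) ∧ (j:ℕ) < 2*k))
      (t := Finset.range k) ?_ ?_
    · simpa using this
    · intro a ha; simp at ha ⊢; omega
    · intro a ha b hb h
      simp only [Finset.mem_coe, Finset.mem_filter] at ha hb
      have h' : (a:ℕ) - k = (b:ℕ) - k := h
      exact Fin.ext (by omega)
  have hvf0 : vf = 0 := by
    rcases hgood xv (-wv) hxcard hwcard habs with h | h
    · funext j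
      show vf j = 0
      by_cases hjk : (j:ℕ) < k
      · have hw : wv j = 0 := by simp [hwv, hjk]
        have hx : xv j = 0 := by
          rw [← congrFun h j, Pi.neg_apply, hw, neg_zero]
        rw [hsum j, hw, hx, add_zero]
      · have hx : xv j = 0 := by simp [hxv, hjk]
        have hw : wv j = 0 := by
          have := congrFun h j
          rw [Pi.neg_apply, hx] at this
          linarith
        rw [hsum j, hx, hw, add_zero]
    · have hwx : wv = xv := neg_injective h
      funext j
      show vf j = 0
      by_cases hjk : (j:ℕ) < k
      · have hw : wv j = 0 := by simp [hwv, hjk]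
        have hx : xv j = 0 := by rw [← congrFun hwx j, hw]
        rw [hsum j, hw, hx, add_zero]
      · have hx : xv j = 0 := by simp [hxv, hjk]
        have hw : wv j = 0 := by rw [congrFun hwx j, hx]
        rw [hsum j, hx, hw, add_zero]
  have hy00 : y = 0 := by
    funext i
    have hthis := congrFun hvf0 ⟨(i:ℕ), lt_of_lt_of_le i.2 hn⟩
    have h2 : vf ⟨(i:ℕ), lt_of_lt_of_le i.2 hn⟩ = y i := by
      have hr : vf ⟨(i:ℕ), lt_of_lt_of_le i.2 hn⟩
          = if h : (i:ℕ) < 2*k then y ⟨(i:ℕ), h⟩ else 0 := rfl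
      rw [hr, dif_pos i.2]
    rw [h2] at hthis
    rw [hthis]
    rfl
  exact hyne hy00

end SPR

/-- For `k ≥ 1` and `n ≥ 2k`: `m ≥ 2k` holds if and only if there exists a real
`m × n` matrix `A` such that any two `k`-sparse vectors with the same phaseless
measurements agree up to global sign. Hence `m = 2k` phaseless measurements are
necessary and sufficient for unique sparse phase retrieval. -/
theorem sparse_phase_retrieval_real_iff (k m n : ℕ) (hk : 1 ≤ k) (hn : 2 * k ≤ n) :
    2 * k ≤ m ↔
      ∃ A : Matrix (Fin m) (Fin n) ℝ, ∀ x z : Fin n → ℝ,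
        (Function.support x).ncard ≤ k →
        (Function.support z).ncard ≤ k →
        (∀ i, |A.mulVec x i| = |A.mulVec z i|) →
        z = x ∨ z = -x := by
  constructor
  · intro hm
    exact SPR.forward hm
  · rintro ⟨A, hA⟩
    exact SPR.converse hk hn A hA
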